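/- Let $\lambda \geq 1$, $\gamma \in (0,1)$. Suppose $m_1, m_2 \in \mathbb{Z}^2$ and there exist $(x,y,t) \in \mathbb{R}^2 \times \mathbb{R}$ with $(x+\cos t, y) \in Q_{m_1}$ and $(x, y+\sin t) \in Q_{m_2}$, where $Q_m$ denotes the cube of side length $4\lambda^{-\gamma}$ centered at $\lambda^{-\gamma} m$. Then $(m_{1,1}-m_{2,1})^2 + (m_{2,2}-m_{1,2})^2 = \lambda^{2\gamma} + O(\lambda^{\gamma})$, i.e., there is an absolute constant $C$ such that $|(m_{1,1}-m_{2,1})^2 + (m_{2,2}-m_{1,2})^2 - \lambda^{2\gamma}| \leq C\lambda^{\gamma}$. -/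
import Mathlib


open Real

theorem index_pairs_near_circle :
    ∃ C : ℝ, 0 < C ∧ ∀ (Λ γ : ℝ), 1 ≤ Λ → 0 < γ → γ < 1 →
      ∀ (m₁ m₂ : ℤ × ℤ) (x y t : ℝ),
        |(x + Real.cos t) - Λ ^ (-γ) * (m₁.1 : ℝ)| ≤ 2 * Λ ^ (-γ) →
        |y - Λ ^ (-γ) * (m₁.2 : ℝ)| ≤ 2 * Λ ^ (-γ) →
        |x - Λ ^ (-γ) * (m₂.1 : ℝ)| ≤ 2 * Λ ^ (-γ) →
        |(y + Real.sin t) - Λ ^ (-γ) * (m₂.2 : ℝ)| ≤ 2 * Λ ^ (-γ) →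
        |((m₁.1 : ℝ) - (m₂.1 : ℝ)) ^ 2 + ((m₂.2 : ℝ) - (m₁.2 : ℝ)) ^ 2 - Λ ^ (2 * γ)|
          ≤ C * Λ ^ γ := by
  refine ⟨48, by norm_num, fun Λ γ hΛ hγ0 hγ1 m₁ m₂ x y t h1 h2 h3 h4 => ?_⟩
  set δ : ℝ := Λ ^ (-γ) with hδ
  set E : ℝ := Λ ^ γ with hE
  have hΛ0 : (0:ℝ) < Λ := lt_of_lt_of_le one_pos hΛ
  have hδpos : 0 < δ := Real.rpow_pos_of_pos hΛ0 _
  have hδ1 : δ ≤ 1 :=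
    Real.rpow_le_one_of_one_le_of_nonpos hΛ (neg_nonpos.mpr hγ0.le)
  have hδE : δ * E = 1 := by
    rw [hδ, hE, ← Real.rpow_add hΛ0]
    simp
  have hE2 : Λ ^ (2 * γ) = E * E := by
    rw [hE, ← Real.rpow_add hΛ0]
    ring_nf
  set a : ℝ := (m₁.1 : ℝ) - (m₂.1 : ℝ)
  set b : ℝ := (m₂.2 : ℝ) - (m₁.2 : ℝ)
  have hc : |Real.cos t - δ * a| ≤ 4 * δ := by
    have : Real.cos t - δ * a = ((x + Real.cos t) - δ * (m₁.1 : ℝ)) - (x - δ * (m₂.1 : ℝ)) := by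
      simp only [a]; ring
    rw [this]
    calc |((x + Real.cos t) - δ * (m₁.1 : ℝ)) - (x - δ * (m₂.1 : ℝ))|
        ≤ |(x + Real.cos t) - δ * (m₁.1 : ℝ)| + |x - δ * (m₂.1 : ℝ)| := abs_sub _ _
      _ ≤ 2 * δ + 2 * δ := add_le_add h1 h3
      _ = 4 * δ := by ring
  have hs : |Real.sin t - δ * b| ≤ 4 * δ := by
    have : Real.sin t - δ * b = ((y + Real.sin t) - δ * (m₂.2 : ℝ)) - (y - δ * (m₁.2 : ℝ)) := by
      simp only [b]; ring
    rw [this]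
    calc |((y + Real.sin t) - δ * (m₂.2 : ℝ)) - (y - δ * (m₁.2 : ℝ))|
        ≤ |(y + Real.sin t) - δ * (m₂.2 : ℝ)| + |y - δ * (m₁.2 : ℝ)| := abs_sub _ _
      _ ≤ 2 * δ + 2 * δ := add_le_add h4 h2
      _ = 4 * δ := by ring
  have hδE2 : δ * δ * (E * E) = 1 := by
    rw [show δ * δ * (E * E) = (δ * E) * (δ * E) by ring, hδE]; norm_num
  have habsc : |Real.cos t| ≤ 1 := Real.abs_cos_le_one t
  have habss : |Real.sin t| ≤ 1 := Real.abs_sin_le_one t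
  have hpyth := Real.sin_sq_add_cos_sq t
  have hc' : |δ * a - Real.cos t| ≤ 4 * δ := by rwa [abs_sub_comm] at hc
  have hs' : |δ * b - Real.sin t| ≤ 4 * δ := by rwa [abs_sub_comm] at hs
  have hca : |δ * a + Real.cos t| ≤ 6 := by
    have : δ * a + Real.cos t = (δ * a - Real.cos t) + 2 * Real.cos t := by ring
    rw [this]
    calc |(δ * a - Real.cos t) + 2 * Real.cos t|
        ≤ |δ * a - Real.cos t| + |2 * Real.cos t| := abs_add_le _ _
      _ ≤ 4 * δ + 2 * 1 := by
          rw [abs_mul]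
          exact add_le_add hc' (by rw [abs_two]; linarith)
      _ ≤ 6 := by linarith
  have hsb : |δ * b + Real.sin t| ≤ 6 := by
    have : δ * b + Real.sin t = (δ * b - Real.sin t) + 2 * Real.sin t := by ring
    rw [this]
    calc |(δ * b - Real.sin t) + 2 * Real.sin t|
        ≤ |δ * b - Real.sin t| + |2 * Real.sin t| := abs_add_le _ _
      _ ≤ 4 * δ + 2 * 1 := by
          rw [abs_mul]
          exact add_le_add hs' (by rw [abs_two]; linarith)
      _ ≤ 6 := by linarith
  have hA : |(δ * a) ^ 2 - Real.cos t ^ 2| ≤ 24 * δ := by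
    rw [show (δ * a) ^ 2 - Real.cos t ^ 2 = (δ * a - Real.cos t) * (δ * a + Real.cos t) by ring,
      abs_mul]
    calc |δ * a - Real.cos t| * |δ * a + Real.cos t| ≤ (4 * δ) * 6 :=
          mul_le_mul hc' hca (abs_nonneg _) (by linarith)
      _ = 24 * δ := by ring
  have hB : |(δ * b) ^ 2 - Real.sin t ^ 2| ≤ 24 * δ := by
    rw [show (δ * b) ^ 2 - Real.sin t ^ 2 = (δ * b - Real.sin t) * (δ * b + Real.sin t) by ring,
      abs_mul]
    calc |δ * b - Real.sin t| * |δ * b + Real.sin t| ≤ (4 * δ) * 6 :=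
          mul_le_mul hs' hsb (abs_nonneg _) (by linarith)
      _ = 24 * δ := by ring
  have key : |δ * δ * (a ^ 2 + b ^ 2) - 1| ≤ 48 * δ := by
    have heq : δ * δ * (a ^ 2 + b ^ 2) - 1
        = ((δ * a) ^ 2 - Real.cos t ^ 2) + ((δ * b) ^ 2 - Real.sin t ^ 2) := by
      rw [← hpyth]; ring
    rw [heq]
    calc |((δ * a) ^ 2 - Real.cos t ^ 2) + ((δ * b) ^ 2 - Real.sin t ^ 2)|
        ≤ |(δ * a) ^ 2 - Real.cos t ^ 2| + |(δ * b) ^ 2 - Real.sin t ^ 2| := abs_add_le _ _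
      _ ≤ 24 * δ + 24 * δ := add_le_add hA hB
      _ = 48 * δ := by ring
  have hEpos : 0 < E := Real.rpow_pos_of_pos hΛ0 _
  have hfinal : a ^ 2 + b ^ 2 - Λ ^ (2 * γ) = (E * E) * (δ * δ * (a ^ 2 + b ^ 2) - 1) := by
    rw [hE2]
    have h1' : (E * E) * (δ * δ * (a ^ 2 + b ^ 2)) = a ^ 2 + b ^ 2 := by
      rw [show (E * E) * (δ * δ * (a ^ 2 + b ^ 2)) = (δ * δ * (E * E)) * (a ^ 2 + b ^ 2) by ring,
        hδE2, one_mul]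
    rw [mul_sub, h1', mul_one]
  rw [hfinal, abs_mul, abs_of_pos (mul_pos hEpos hEpos)]
  calc E * E * |δ * δ * (a ^ 2 + b ^ 2) - 1| ≤ E * E * (48 * δ) := by
        exact mul_le_mul_of_nonneg_left key (mul_pos hEpos hEpos).le
    _ = 48 * E * (E * δ) := by ring
    _ = 48 * E := by rw [mul_comm E δ, hδE, mul_one]
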